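/- Let V be a finite-dimensional real inner product space, 𝔤 ⊆ 𝔰𝔬(V) a Lie subalgebra, and suppose the associative subalgebra of End(V) generated by 𝔤 equals End(V). If L : V → W is a linear map to another inner product space such that, for some faithful normed module over the Clifford algebra of V ⊕ W and unit vector u, one has c(L ∘ ρ)u = 0 for every ρ in the associative algebra generated by 𝔤, where c(L∘ρ) = Σᵢⱼ ⟨L ρ(eᵢ), fⱼ⟩ c_W(fⱼ) c_V(eᵢ) (with orthonormal bases eᵢ of V, fⱼ of W), then L = 0. -/
import Mathlib


open scoped RealInnerProductSpace BigOperators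

/-- Clifford multiplication by a linear map `F : V → W`, i.e.
`c(F) = Σᵢⱼ ⟨F eᵢ, fⱼ⟩ c_W(fⱼ) c_V(eᵢ)` for orthonormal bases `(eᵢ)` of `V`, `(fⱼ)` of `W`. -/
noncomputable def cliffordOfMap {V W U : Type*}
    [NormedAddCommGroup V] [InnerProductSpace ℝ V]
    [NormedAddCommGroup W] [InnerProductSpace ℝ W]
    [NormedAddCommGroup U] [InnerProductSpace ℝ U]
    {m k : ℕ} (e : OrthonormalBasis (Fin m) ℝ V) (f : OrthonormalBasis (Fin k) ℝ W)
    (cV : V → (U →ₗ[ℝ] U)) (cW : W → (U →ₗ[ℝ] U)) (F : V →ₗ[ℝ] W) : U →ₗ[ℝ] U :=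
  ∑ i : Fin m, ∑ j : Fin k, ⟪F (e i), f j⟫ • (cW (f j) ∘ₗ cV (e i))

/-- **real type.** Let `𝔤 ⊆ 𝔰𝔬(V)` be a Lie subalgebra whose generated
associative subalgebra is all of `End(V)`, and let `cV`, `cW` be the Clifford multiplications
of `V` and `W` inside (a module over) the Clifford algebra of `V ⊕ W`.  If `L : V → W` is a
linear map and `u` a unit vector such that `c(L ∘ ρ)u = 0` for every `ρ` in the associative
algebra generated by `𝔤`, then `L = 0`. -/
lemma sq_sum_clifford {U : Type*} [AddCommGroup U] [Module ℝ U] {n : ℕ}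
    (A : Fin n → (U →ₗ[ℝ] U)) (b : Fin n → ℝ) (ε : ℝ)
    (hA : ∀ i j, A i ∘ₗ A j + A j ∘ₗ A i = (if i = j then ε else 0) • LinearMap.id) :
    (∑ i, b i • A i) ∘ₗ (∑ j, b j • A j) = ((ε * ∑ i, b i ^ 2) / 2) • LinearMap.id := by
  have key : (∑ i, b i • A i) ∘ₗ (∑ j, b j • A j) + (∑ i, b i • A i) ∘ₗ (∑ j, b j • A j)
      = (ε * ∑ i, b i ^ 2) • LinearMap.id := by
    have expand : (∑ i, b i • A i) ∘ₗ (∑ j, b j • A j)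
        = ∑ i, ∑ j, (b i * b j) • (A i ∘ₗ A j) := by
      simp only [← Module.End.mul_eq_comp, Finset.sum_mul_sum, smul_mul_smul_comm]
    rw [expand]
    nth_rewrite 2 [Finset.sum_comm]
    rw [← Finset.sum_add_distrib]
    have : ∀ i, (∑ j, (b i * b j) • (A i ∘ₗ A j)) + (∑ j, (b j * b i) • (A j ∘ₗ A i))
        = (ε * b i ^ 2) • LinearMap.id := by
      intro i
      rw [← Finset.sum_add_distrib]
      have : ∀ j ∈ Finset.univ, ((b i * b j) • (A i ∘ₗ A j)) + ((b j * b i) • (A j ∘ₗ A i))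
          = ((if i = j then ε else 0) * (b i * b j)) • LinearMap.id := by
        intro j _
        rw [mul_comm (b j) (b i), ← smul_add, hA i j, smul_smul, mul_comm]
      rw [Finset.sum_congr rfl this]
      simp [Finset.sum_ite_eq, mul_comm, pow_two, mul_assoc]
    rw [Finset.sum_congr rfl (fun i _ => this i), ← Finset.sum_smul, Finset.mul_sum]
  have h2 : (2:ℝ) • ((∑ i, b i • A i) ∘ₗ (∑ j, b j • A j)) = (ε * ∑ i, b i ^ 2) • LinearMap.id := by
    rw [two_smul]; exact key
  calc (∑ i, b i • A i) ∘ₗ (∑ j, b j • A j)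
      = ((1:ℝ)/2) • ((2:ℝ) • ((∑ i, b i • A i) ∘ₗ (∑ j, b j • A j))) := by
        rw [smul_smul]; norm_num
    _ = ((ε * ∑ i, b i ^ 2) / 2) • LinearMap.id := by rw [h2, smul_smul]; ring_nf


theorem map_vanishes_of_clifford_relations_real_type
    {V W U : Type*}
    [NormedAddCommGroup V] [InnerProductSpace ℝ V] [FiniteDimensional ℝ V]
    [NormedAddCommGroup W] [InnerProductSpace ℝ W] [FiniteDimensional ℝ W]
    [NormedAddCommGroup U] [InnerProductSpace ℝ U] [FiniteDimensional ℝ U]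
    {m k : ℕ} (e : OrthonormalBasis (Fin m) ℝ V) (f : OrthonormalBasis (Fin k) ℝ W)
    (cV : V → (U →ₗ[ℝ] U)) (cW : W → (U →ₗ[ℝ] U))
    (hcV : ∀ v v' : V, cV v ∘ₗ cV v' + cV v' ∘ₗ cV v = (-2 * ⟪v, v'⟫) • LinearMap.id)
    (hcW : ∀ w w' : W, cW w ∘ₗ cW w' + cW w' ∘ₗ cW w = (2 * ⟪w, w'⟫) • LinearMap.id)
    (hmix : ∀ (v : V) (w : W), cV v ∘ₗ cW w + cW w ∘ₗ cV v = 0)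
    (hcVskew : ∀ v : V, LinearMap.adjoint (cV v) = -(cV v))
    (hcWself : ∀ w : W, LinearMap.adjoint (cW w) = cW w)
    (𝔤 : Submodule ℝ (V →ₗ[ℝ] V))
    (h𝔤skew : ∀ g ∈ 𝔤, LinearMap.adjoint g = -g)
    (h𝔤lie : ∀ g ∈ 𝔤, ∀ h ∈ 𝔤, g ∘ₗ h - h ∘ₗ g ∈ 𝔤)
    (h𝔤full : Algebra.adjoin ℝ (𝔤 : Set (Module.End ℝ V)) = ⊤)
    (L : V →ₗ[ℝ] W) (u : U) (hu : ‖u‖ = 1)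
    (hvanish : ∀ ρ : Module.End ℝ V, ρ ∈ Algebra.adjoin ℝ (𝔤 : Set (Module.End ℝ V)) →
      cliffordOfMap e f cV cW (L ∘ₗ ρ) u = 0) :
    L = 0 := by
  have hvan : ∀ ρ : Module.End ℝ V, cliffordOfMap e f cV cW (L ∘ₗ ρ) u = 0 := fun ρ =>
    hvanish ρ (h𝔤full ▸ Algebra.mem_top)
  have hu0 : u ≠ 0 := fun h => by simp [h] at hu
  ext h
  simp only [LinearMap.zero_apply]
  by_contra hLh
  have hh : h ≠ 0 := by rintro rfl; simp at hLh
  set ρ : V →ₗ[ℝ] V :=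
    { toFun := fun x => ⟪h, x⟫ • h
      map_add' := fun x y => by simp [inner_add_right, add_smul]
      map_smul' := fun c x => by simp [real_inner_smul_right, mul_smul] }
    with hρdef
  set a : Fin m → ℝ := fun i => ⟪h, e i⟫ with ha
  set b : Fin k → ℝ := fun j => ⟪L h, f j⟫ with hb
  set CV : U →ₗ[ℝ] U := ∑ i, a i • cV (e i) with hCV
  set CW : U →ₗ[ℝ] U := ∑ j, b j • cW (f j) with hCW
  have hasq : ∑ i, a i ^ 2 = ‖h‖ ^ 2 := by
    have := e.sum_inner_mul_inner h h
    rw [real_inner_self_eq_norm_sq] at this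
    rw [← this]
    exact Finset.sum_congr rfl fun i _ => by simp [ha, pow_two, real_inner_comm]
  have hbsq : ∑ j, b j ^ 2 = ‖L h‖ ^ 2 := by
    have := f.sum_inner_mul_inner (L h) (L h)
    rw [real_inner_self_eq_norm_sq] at this
    rw [← this]
    exact Finset.sum_congr rfl fun j _ => by simp [hb, pow_two, real_inner_comm]
  have hCVsq : CV ∘ₗ CV = (-(‖h‖ ^ 2)) • LinearMap.id := by
    rw [hCV, sq_sum_clifford (fun i => cV (e i)) a (-2)
      (fun i j => by
        rw [hcV, orthonormal_iff_ite.mp e.orthonormal i j]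
        split_ifs <;> norm_num), hasq]
    congr 1; ring
  have hCWsq : CW ∘ₗ CW = (‖L h‖ ^ 2) • LinearMap.id := by
    rw [hCW, sq_sum_clifford (fun j => cW (f j)) b 2
      (fun i j => by
        rw [hcW, orthonormal_iff_ite.mp f.orthonormal i j]
        split_ifs <;> norm_num), hbsq]
    congr 1; ring
  have hmain : CW (CV u) = 0 := by
    have hv := hvan ρ
    rw [show cliffordOfMap e f cV cW (L ∘ₗ ρ) u = CW (CV u) from ?_] at hv
    · exact hv
    · rw [cliffordOfMap]
      simp only [LinearMap.sum_apply, LinearMap.smul_apply, LinearMap.comp_apply,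
        hCV, hCW, map_sum, map_smul]
      refine Finset.sum_congr rfl fun i _ => ?_
      rw [Finset.smul_sum]
      refine Finset.sum_congr rfl fun j _ => ?_
      have hρe : ρ (e i) = a i • h := rfl
      rw [hρe, map_smul, real_inner_smul_left, mul_smul]
  have hCVu : CV u = 0 := by
    have h1 : CW (CW (CV u)) = 0 := by rw [hmain, map_zero]
    have h2 : CW (CW (CV u)) = (‖L h‖ ^ 2) • CV u := by
      have := congrArg (fun T : U →ₗ[ℝ] U => T (CV u)) hCWsq
      simpa using this
    rw [h2] at h1
    rcases smul_eq_zero.mp h1 with h' | h'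
    · exact absurd (by simpa using pow_eq_zero_iff (n := 2) two_ne_zero |>.mp h') hLh
    · exact h'
  have : (-(‖h‖ ^ 2)) • u = 0 := by
    have := congrArg (fun T : U →ₗ[ℝ] U => T u) hCVsq
    simp only [LinearMap.comp_apply, LinearMap.smul_apply, LinearMap.id_apply] at this
    rw [hCVu, map_zero] at this
    exact this.symm
  rcases smul_eq_zero.mp this with h' | h'
  · exact hh (by simpa using pow_eq_zero_iff (n := 2) two_ne_zero |>.mp (neg_eq_zero.mp h'))
  · exact hu0 h'
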